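/- arXiv:2402.13624 — 2 statements merged into one kernel-verified Lean document; each statement's English description precedes it below -/
import Mathlib

section
/- For all positive natural numbers k and n, the worst-case bi-spanner sizes satisfy σ_bc(kn) ≤ k²·σ_bc(n). -/
/-!
Formalization framework for temporal graphs, temporal paths, spanners,
bi-spanners, and related notions from the paper on temporal spanners of
temporal cliques and bi-cliques.

A temporal graph on vertex type `V` is given by a labeling `lab : Sym2 V → L`
(only values on actual edges matter) together with an edge set
`E : Set (Sym2 V)`.  A temporal path is a nonempty list of vertices whose
consecutive pairs are edges of the allowed edge set and whose labels are
non-decreasing along the path (non-strict temporal path).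
-/

namespace TS

variable {V : Type} {L : Type} [LinearOrder L]

/-- The list of (undirected) edges traversed by a list of vertices. -/
def pathEdges (p : List V) : List (Sym2 V) :=
  (p.zip p.tail).map fun q => s(q.1, q.2)

/-- `p` is a temporal path using only edges from `S`, labelled by `lab`:
nonempty, all edges in `S`, labels non-decreasing along the path. -/
def IsTemporalPath (lab : Sym2 V → L) (S : Set (Sym2 V)) (p : List V) : Prop :=
  p ≠ [] ∧ (∀ e ∈ pathEdges p, e ∈ S) ∧
    (pathEdges p).Chain' fun e f => lab e ≤ lab f

/-- `u` reaches `v` via a temporal path contained in `S`. -/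
def Reaches (lab : Sym2 V → L) (S : Set (Sym2 V)) (u v : V) : Prop :=
  ∃ p : List V, p.head? = some u ∧ p.getLast? = some v ∧ IsTemporalPath lab S p

/-- Edge set of the complete graph on `V`. -/
def cliqueEdges (V : Type) : Set (Sym2 V) := {e | ¬ e.IsDiag}

/-- Edge set `A ⊗ B` of the complete bipartite graph with parts `α` and `β`. -/
def bicliqueEdges (α β : Type) : Set (Sym2 (α ⊕ β)) :=
  {e | ∃ a b, e = s(Sum.inl a, Sum.inr b)}

/-- `S` is a spanner of the temporal graph with edge set `E`:
`S ⊆ E` and every vertex reaches every other vertex within `S`. -/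
def IsSpanner (lab : Sym2 V → L) (E S : Set (Sym2 V)) : Prop :=
  S ⊆ E ∧ ∀ u v : V, Reaches lab S u v

/-- `S` is a bi-spanner of the temporal bi-clique with parts `α`, `β`:
`S ⊆ α ⊗ β` and every `a ∈ α` reaches every `b ∈ β` within `S`. -/
def IsBiSpanner {α β : Type} (lab : Sym2 (α ⊕ β) → L) (S : Set (Sym2 (α ⊕ β))) : Prop :=
  S ⊆ bicliqueEdges α β ∧ ∀ (a : α) (b : β), Reaches lab S (Sum.inl a) (Sum.inr b)

/-- `σ_cl n`: the minimum number `m` such that every temporal clique on `n`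
vertices admits a spanner with at most `m` edges. -/
noncomputable def sigmaCl (n : ℕ) : ℕ :=
  sInf {m | ∀ lab : Sym2 (Fin n) → ℕ, ∃ S : Finset (Sym2 (Fin n)),
    IsSpanner lab (cliqueEdges (Fin n)) (↑S) ∧ S.card ≤ m}

/-- `σ_bc n`: the minimum number `m` such that every temporal bi-clique with
`n` vertices on each side admits a bi-spanner with at most `m` edges. -/
noncomputable def sigmaBc (n : ℕ) : ℕ :=
  sInf {m | ∀ lab : Sym2 (Fin n ⊕ Fin n) → ℕ, ∃ S : Finset (Sym2 (Fin n ⊕ Fin n)),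
    IsBiSpanner lab (↑S) ∧ S.card ≤ m}

/-- `In(v,t)`: vertices reaching `v` via a temporal path (in edge set `E`)
all of whose labels are at most `t`. -/
def InSet (lab : Sym2 V → L) (E : Set (Sym2 V)) (v : V) (t : L) : Set V :=
  {u | ∃ p : List V, p.head? = some u ∧ p.getLast? = some v ∧
    IsTemporalPath lab E p ∧ ∀ e ∈ pathEdges p, lab e ≤ t}

/-- `Out(v,t)`: vertices that `v` reaches via a temporal path (in edge set `E`)
all of whose labels are at least `t`. -/
def OutSet (lab : Sym2 V → L) (E : Set (Sym2 V)) (v : V) (t : L) : Set V :=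
  {w | ∃ p : List V, p.head? = some v ∧ p.getLast? = some w ∧
    IsTemporalPath lab E p ∧ ∀ e ∈ pathEdges p, t ≤ lab e}

/-- `In(e)` for the edge `e = {u,v}`. -/
def InEdge (lab : Sym2 V → L) (E : Set (Sym2 V)) (u v : V) : Set V :=
  InSet lab E u (lab s(u, v)) ∪ InSet lab E v (lab s(u, v))

/-- `Out(e)` for the edge `e = {u,v}`. -/
def OutEdge (lab : Sym2 V → L) (E : Set (Sym2 V)) (u v : V) : Set V :=
  OutSet lab E u (lab s(u, v)) ∪ OutSet lab E v (lab s(u, v))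

variable {α β : Type}

/-- In a bi-clique, `b` is the earliest neighbor `π⁻(a)` of `a ∈ A`. -/
def IsEarliestNbrA (lab : Sym2 (α ⊕ β) → L) (a : α) (b : β) : Prop :=
  ∀ b' : β, lab s(Sum.inl a, Sum.inr b) ≤ lab s(Sum.inl a, Sum.inr b')

/-- In a bi-clique, `a` is the earliest neighbor `π⁻(b)` of `b ∈ B`. -/
def IsEarliestNbrB (lab : Sym2 (α ⊕ β) → L) (b : β) (a : α) : Prop :=
  ∀ a' : α, lab s(Sum.inl a, Sum.inr b) ≤ lab s(Sum.inl a', Sum.inr b)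

/-- In a bi-clique, `b` is the latest neighbor `π⁺(a)` of `a ∈ A`. -/
def IsLatestNbrA (lab : Sym2 (α ⊕ β) → L) (a : α) (b : β) : Prop :=
  ∀ b' : β, lab s(Sum.inl a, Sum.inr b') ≤ lab s(Sum.inl a, Sum.inr b)

/-- In a bi-clique, `a` is the latest neighbor `π⁺(b)` of `b ∈ B`. -/
def IsLatestNbrB (lab : Sym2 (α ⊕ β) → L) (b : β) (a : α) : Prop :=
  ∀ a' : α, lab s(Sum.inl a', Sum.inr b) ≤ lab s(Sum.inl a, Sum.inr b)

/-- The bi-clique is extremally matched: both the set `M⁻` of earliest edges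
and the set `M⁺` of latest edges form perfect matchings, i.e. the earliest-
(resp. latest-) neighbor maps of the two sides are mutually inverse. -/
def ExtremallyMatched (lab : Sym2 (α ⊕ β) → L) : Prop :=
  (∃ (f : α → β) (g : β → α),
    (∀ a, IsEarliestNbrA lab a (f a)) ∧ (∀ b, IsEarliestNbrB lab b (g b)) ∧
    (∀ a, g (f a) = a) ∧ (∀ b, f (g b) = b)) ∧
  (∃ (f : α → β) (g : β → α),
    (∀ a, IsLatestNbrA lab a (f a)) ∧ (∀ b, IsLatestNbrB lab b (g b)) ∧
    (∀ a, g (f a) = a) ∧ (∀ b, f (g b) = b))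

/-- `a ∈ A` is dismountable: there is `a' ≠ a` with
`λ({a, π⁻(a')}) ≤ λ({a', π⁻(a')})`. -/
def DismountableA (lab : Sym2 (α ⊕ β) → L) (a : α) : Prop :=
  ∃ (a' : α) (b : β), a' ≠ a ∧ IsEarliestNbrA lab a' b ∧
    lab s(Sum.inl a, Sum.inr b) ≤ lab s(Sum.inl a', Sum.inr b)

/-- `b ∈ B` is dismountable: there is `b' ≠ b` with
`λ({b', π⁺(b')}) ≤ λ({b, π⁺(b')})`. -/
def DismountableB (lab : Sym2 (α ⊕ β) → L) (b : β) : Prop :=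
  ∃ (b' : β) (a : α), b' ≠ b ∧ IsLatestNbrB lab b' a ∧
    lab s(Sum.inl a, Sum.inr b') ≤ lab s(Sum.inl a, Sum.inr b)

/-- The edge `{a', b'}` is `e`-reverted for `e = {a,b}`:
`λ({a', b}) ≤ λ({π⁺(b'), b})` or `λ({π⁻(a'), a}) ≤ λ({b', a})`. -/
def Reverted (lab : Sym2 (α ⊕ β) → L) (a : α) (b : β) (a' : α) (b' : β) : Prop :=
  (∃ a'' : α, IsLatestNbrB lab b' a'' ∧
    lab s(Sum.inl a', Sum.inr b) ≤ lab s(Sum.inl a'', Sum.inr b)) ∨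
  (∃ b'' : β, IsEarliestNbrA lab a' b'' ∧
    lab s(Sum.inl a, Sum.inr b'') ≤ lab s(Sum.inl a, Sum.inr b'))

/-- `M(e)`: the set of edges of the bi-clique that are *not* `e`-reverted,
for `e = {a,b}`. -/
def MSet (lab : Sym2 (α ⊕ β) → L) (a : α) (b : β) : Set (Sym2 (α ⊕ β)) :=
  {e | ∃ (a' : α) (b' : β), e = s(Sum.inl a', Sum.inr b') ∧ ¬ Reverted lab a b a' b'}

/-- `ind_{a}({a,b})`: the (1-based) rank of the edge `{a,b}` among the edges
incident to `a ∈ A`, ordered increasingly by label. -/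
def indA [Fintype β] (lab : Sym2 (α ⊕ β) → ℕ) (a : α) (b : β) : ℕ :=
  (Finset.univ.filter fun b' : β =>
    lab s(Sum.inl a, Sum.inr b') ≤ lab s(Sum.inl a, Sum.inr b)).card

/-- `ind_{b}({a,b})`: the (1-based) rank of the edge `{a,b}` among the edges
incident to `b ∈ B`, ordered increasingly by label. -/
def indB [Fintype α] (lab : Sym2 (α ⊕ β) → ℕ) (a : α) (b : β) : ℕ :=
  (Finset.univ.filter fun a' : α =>
    lab s(Sum.inl a', Sum.inr b) ≤ lab s(Sum.inl a, Sum.inr b)).card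

/-- Underlying symmetric label function of the shifted matching graph `SM_n`:
the edge `{a_i, b_j}` gets label `(j - i) mod n`. -/
def smFun (n : ℕ) : (Fin n ⊕ Fin n) → (Fin n ⊕ Fin n) → ℕ
  | Sum.inl i, Sum.inr j => (n + (j : ℕ) - (i : ℕ)) % n
  | Sum.inr j, Sum.inl i => (n + (j : ℕ) - (i : ℕ)) % n
  | _, _ => 0

theorem smFun_symm (n : ℕ) : ∀ x y, smFun n x y = smFun n y x := by
  rintro (i | i) (j | j) <;> rfl

/-- The labeling of the shifted matching graph `SM_n`. -/
def smLab (n : ℕ) : Sym2 (Fin n ⊕ Fin n) → ℕ :=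
  Sym2.lift ⟨smFun n, smFun_symm n⟩

end TS

namespace TS

variable {V : Type} {L : Type} [LinearOrder L]

lemma pathEdges_map {W : Type} (f : V → W) (p : List V) :
    pathEdges (p.map f) = (pathEdges p).map (Sym2.map f) := by
  simp [pathEdges, ← List.map_tail, List.zip_map, List.map_map, Function.comp_def]

lemma reaches_map {W : Type} (f : V → W) (lab : Sym2 W → L) {S : Set (Sym2 V)} {u v : V}
    (h : Reaches (lab ∘ Sym2.map f) S u v) :
    Reaches lab (Sym2.map f '' S) (f u) (f v) := by
  obtain ⟨p, hh, hl, hne, hS, hch⟩ := h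
  refine ⟨p.map f, ?_, ?_, ?_, ?_, ?_⟩
  · rw [List.head?_map, hh]; rfl
  · rw [List.getLast?_map, hl]; rfl
  · simpa using hne
  · intro e he
    rw [pathEdges_map] at he
    obtain ⟨e', he', rfl⟩ := List.mem_map.1 he
    exact ⟨e', hS e' he', rfl⟩
  · rw [pathEdges_map]; exact (List.isChain_map _).2 hch

lemma reaches_mono (lab : Sym2 V → L) {S T : Set (Sym2 V)} (hST : S ⊆ T) {u v : V}
    (h : Reaches lab S u v) : Reaches lab T u v := by
  obtain ⟨p, hh, hl, hne, hS, hch⟩ := h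
  exact ⟨p, hh, hl, hne, fun e he => hST (hS e he), hch⟩

/-- for all positive `k` and `n`, `σ_bc(kn) ≤ k²·σ_bc(n)`. -/
theorem stmt4 (k n : ℕ) (hk : 0 < k) (hn : 0 < n) :
    sigmaBc (k * n) ≤ k ^ 2 * sigmaBc n := by
  classical
  have hmem : ∀ lab : Sym2 (Fin n ⊕ Fin n) → ℕ, ∃ S : Finset (Sym2 (Fin n ⊕ Fin n)),
      IsBiSpanner lab (↑S) ∧ S.card ≤ sigmaBc n := by
    have hne : {m | ∀ lab : Sym2 (Fin n ⊕ Fin n) → ℕ, ∃ S : Finset (Sym2 (Fin n ⊕ Fin n)),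
        IsBiSpanner lab (↑S) ∧ S.card ≤ m}.Nonempty := by
      refine ⟨(Finset.univ.filter
        (fun e => e ∈ bicliqueEdges (Fin n) (Fin n))).card, fun lab => ?_⟩
      refine ⟨Finset.univ.filter (fun e => e ∈ bicliqueEdges (Fin n) (Fin n)), ⟨?_, ?_⟩, le_rfl⟩
      · intro e he; simpa using he
      · intro a b
        refine ⟨[Sum.inl a, Sum.inr b], rfl, rfl, by simp, ?_, ?_⟩
        · simp only [pathEdges, List.zip, List.tail_cons, List.zipWith, List.map, List.mem_singleton]
          rintro e rfl
          simp only [Finset.coe_filter, Set.mem_setOf_eq, Finset.mem_univ, true_and]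
          exact ⟨a, b, rfl⟩
        · simp [pathEdges, List.Chain']
    exact Nat.sInf_mem hne
  choose Sp hSp hcard using hmem
  have hlt : ∀ (i : Fin k) (a : Fin n), n * (i : ℕ) + (a : ℕ) < k * n := by
    intro i a
    have h1 : (i : ℕ) + 1 ≤ k := i.isLt
    have h2 : (a : ℕ) < n := a.isLt
    calc n * (i : ℕ) + (a : ℕ) < n * (i : ℕ) + n := by omega
      _ = n * ((i : ℕ) + 1) := by ring
      _ ≤ n * k := Nat.mul_le_mul_left n h1
      _ = k * n := Nat.mul_comm n k
  set g : Fin k → Fin n → Fin (k * n) := fun i a => ⟨n * i + a, hlt i a⟩ with hg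
  set emb : Fin k → Fin k → (Fin n ⊕ Fin n) → (Fin (k * n) ⊕ Fin (k * n)) :=
    fun i j => Sum.map (g i) (g j) with hemb
  apply Nat.sInf_le
  intro lab
  set T : Finset (Sym2 (Fin (k * n) ⊕ Fin (k * n))) :=
    Finset.univ.biUnion (fun ij : Fin k × Fin k =>
      (Sp (lab ∘ Sym2.map (emb ij.1 ij.2))).image (Sym2.map (emb ij.1 ij.2))) with hT
  refine ⟨T, ⟨?_, ?_⟩, ?_⟩
  · intro e he
    rw [Finset.mem_coe, hT, Finset.mem_biUnion] at he
    obtain ⟨ij, -, he⟩ := he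
    obtain ⟨e', he', rfl⟩ := Finset.mem_image.1 he
    obtain ⟨a', b', rfl⟩ := (hSp (lab ∘ Sym2.map (emb ij.1 ij.2))).1 he'
    exact ⟨g ij.1 a', g ij.2 b', by rw [Sym2.map_pair_eq]; rfl⟩
  · intro a b
    have hdiva : (a : ℕ) / n < k := (Nat.div_lt_iff_lt_mul hn).2 a.isLt
    have hdivb : (b : ℕ) / n < k := (Nat.div_lt_iff_lt_mul hn).2 b.isLt
    set i : Fin k := ⟨(a : ℕ) / n, hdiva⟩
    set j : Fin k := ⟨(b : ℕ) / n, hdivb⟩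
    set a' : Fin n := ⟨(a : ℕ) % n, Nat.mod_lt _ hn⟩
    set b' : Fin n := ⟨(b : ℕ) % n, Nat.mod_lt _ hn⟩
    have hga : g i a' = a := by
      apply Fin.ext
      simpa using Nat.div_add_mod (a : ℕ) n
    have hgb : g j b' = b := by
      apply Fin.ext
      simpa using Nat.div_add_mod (b : ℕ) n
    have h := (hSp (lab ∘ Sym2.map (emb i j))).2 a' b'
    have h2 := reaches_map (emb i j) lab h
    have hea : emb i j (Sum.inl a') = Sum.inl a := by simp [hemb, hga]
    have heb : emb i j (Sum.inr b') = Sum.inr b := by simp [hemb, hgb]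
    rw [hea, heb] at h2
    refine reaches_mono lab ?_ h2
    rintro e ⟨e', he', rfl⟩
    rw [Finset.mem_coe, hT, Finset.mem_biUnion]
    exact ⟨(i, j), Finset.mem_univ _, Finset.mem_image_of_mem _ he'⟩
  · calc T.card ≤ ∑ ij : Fin k × Fin k,
        ((Sp (lab ∘ Sym2.map (emb ij.1 ij.2))).image (Sym2.map (emb ij.1 ij.2))).card :=
          Finset.card_biUnion_le
      _ ≤ ∑ _ij : Fin k × Fin k, sigmaBc n :=
          Finset.sum_le_sum fun ij _ => le_trans Finset.card_image_le (hcard _)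
      _ = k ^ 2 * sigmaBc n := by
          rw [Finset.sum_const, smul_eq_mul, Finset.card_univ, Fintype.card_prod,
            Fintype.card_fin, sq]


end TS
end

section
/- Let D = (A,B,λ) be an extremally matched temporal bi-clique with injective labeling λ. Then for every edge e ∈ A⊗B, |In(e) ∩ A| = |In(e) ∩ B| and |Out(e) ∩ A| = |Out(e) ∩ B|. -/
namespace TS

variable {V : Type} {L : Type} [LinearOrder L]

lemma pathEdges_cons_cons (a b : V) (l : List V) :
    pathEdges (a :: b :: l) = s(a, b) :: pathEdges (b :: l) := rfl

lemma pathEdges_concat : ∀ (a : V) (l : List V) (u : V),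
    pathEdges ((a :: l) ++ [u]) =
      pathEdges (a :: l) ++ [s((a :: l).getLast (by simp), u)]
  | a, [], u => rfl
  | a, b :: l, u => by
    have h := pathEdges_concat b l u
    simp only [List.cons_append] at h ⊢
    rw [pathEdges_cons_cons, pathEdges_cons_cons, h]
    simp

lemma pathEdges_getLast : ∀ (a b : V) (l : List V),
    ∃ y, (pathEdges (a :: b :: l)).getLast? =
      some s(y, (a :: b :: l).getLast (by simp))
  | a, b, [] => ⟨a, rfl⟩
  | a, b, c :: l => by
    obtain ⟨y, hy⟩ := pathEdges_getLast b c l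
    refine ⟨y, ?_⟩
    rw [pathEdges_cons_cons, pathEdges_cons_cons, List.getLast?_cons_cons]
    rw [pathEdges_cons_cons] at hy
    rw [hy, List.getLast_cons (by simp : (b :: c :: l) ≠ [])]

lemma InSet_extend' {lab : Sym2 V → L} {E : Set (Sym2 V)} {u v w : V} {t : L}
    (hv : v ∈ InSet lab E w t) (hE : s(u, v) ∈ E)
    (hmin : ∀ x, s(v, x) ∈ E → lab s(u, v) ≤ lab s(v, x))
    (htriv : v = w → lab s(u, v) ≤ t) :
    u ∈ InSet lab E w t := by
  obtain ⟨p, hhead, hlast, ⟨hne, hmemE, hchain⟩, hlabs⟩ := hv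
  match p, hne with
  | [x], _ =>
    have hxv : x = v := by simpa using hhead
    have hxw : x = w := by simpa using hlast
    refine ⟨[u, v], rfl, by simp [hxv ▸ hxw], ⟨by simp, ?_, List.isChain_singleton _⟩, ?_⟩
    · intro e he
      have : e = s(u, v) := by simpa [pathEdges] using he
      subst this; exact hE
    · intro e he
      have : e = s(u, v) := by simpa [pathEdges] using he
      subst this; exact htriv (hxv ▸ hxw)
  | x :: y :: l, _ =>
    have hxv : x = v := by simpa using hhead
    subst hxv
    have hvy : s(x, y) ∈ pathEdges (x :: y :: l) := by
      rw [pathEdges_cons_cons]; exact List.mem_cons_self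
    refine ⟨u :: x :: y :: l, rfl, ?_, ⟨by simp, ?_, ?_⟩, ?_⟩
    · rw [List.getLast?_cons_cons]; exact hlast
    · intro e he
      rw [pathEdges_cons_cons] at he
      rcases List.mem_cons.1 he with h | h
      · subst h; exact hE
      · exact hmemE _ h
    · rw [pathEdges_cons_cons, pathEdges_cons_cons]
      rw [pathEdges_cons_cons] at hchain
      exact List.IsChain.cons_cons (hmin y (hmemE _ hvy)) hchain
    · intro e he
      rw [pathEdges_cons_cons] at he
      rcases List.mem_cons.1 he with h | h
      · subst h; exact le_trans (hmin y (hmemE _ hvy)) (hlabs _ hvy)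
      · exact hlabs _ h

lemma OutSet_extend' {lab : Sym2 V → L} {E : Set (Sym2 V)} {u v w : V} {t : L}
    (hv : w ∈ OutSet lab E v t) (hE : s(w, u) ∈ E)
    (hmax : ∀ x, s(x, w) ∈ E → lab s(x, w) ≤ lab s(w, u))
    (htriv : w = v → t ≤ lab s(w, u)) :
    u ∈ OutSet lab E v t := by
  obtain ⟨p, hhead, hlast, ⟨hne, hmemE, hchain⟩, hlabs⟩ := hv
  match p, hne with
  | [x], _ =>
    have hxv : x = v := by simpa using hhead
    have hxw : x = w := by simpa using hlast
    refine ⟨[w, u], by simp [← hxw, hxv], rfl, ⟨by simp, ?_, List.isChain_singleton _⟩, ?_⟩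
    · intro e he
      have : e = s(w, u) := by simpa [pathEdges] using he
      subst this; exact hE
    · intro e he
      have : e = s(w, u) := by simpa [pathEdges] using he
      subst this; exact htriv (hxw ▸ hxv)
  | x :: y :: l, _ =>
    have hxv : x = v := by simpa using hhead
    subst hxv
    have hgl : (x :: y :: l).getLast (by simp) = w := by
      have h1 := List.getLast?_eq_getLast (l := x :: y :: l) (by simp)
      rw [h1] at hlast
      exact Option.some_injective _ hlast
    obtain ⟨y', hy'⟩ := pathEdges_getLast x y l
    rw [hgl] at hy'
    have hy'mem : s(y', w) ∈ pathEdges (x :: y :: l) :=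
      List.mem_of_getLast? hy'
    refine ⟨(x :: y :: l) ++ [u], by simp, List.getLast?_concat, ⟨by simp, ?_, ?_⟩, ?_⟩
    · intro e he
      rw [pathEdges_concat, hgl] at he
      rcases List.mem_append.1 he with h | h
      · exact hmemE _ h
      · simp only [List.mem_singleton] at h; subst h; exact hE
    · rw [pathEdges_concat, hgl]
      change List.IsChain _ _; rw [List.isChain_append]
      refine ⟨hchain, List.isChain_singleton _, ?_⟩
      intro e he f hf
      simp only [List.head?_cons, Option.mem_def, Option.some.injEq] at hf
      subst hf
      rw [hy'] at he
      simp only [Option.mem_def, Option.some.injEq] at he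
      subst he
      exact hmax y' (hmemE _ hy'mem)
    · intro e he
      rw [pathEdges_concat, hgl] at he
      rcases List.mem_append.1 he with h | h
      · exact hlabs _ h
      · simp only [List.mem_singleton] at h; subst h
        exact le_trans (hlabs _ hy'mem) (hmax y' (hmemE _ hy'mem))

lemma biclique_incident_inl {α β : Type} {a : α} {x : α ⊕ β}
    (h : s(Sum.inl a, x) ∈ bicliqueEdges α β) : ∃ b : β, x = Sum.inr b := by
  obtain ⟨a', b', h⟩ := h
  rw [Sym2.eq_iff] at h
  rcases h with ⟨h1, h2⟩ | ⟨h1, h2⟩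
  · exact ⟨b', h2⟩
  · exact absurd h1 (by simp)

lemma biclique_incident_inr {α β : Type} {b : β} {x : α ⊕ β}
    (h : s(Sum.inr b, x) ∈ bicliqueEdges α β) : ∃ a : α, x = Sum.inl a := by
  obtain ⟨a', b', h⟩ := h
  rw [Sym2.eq_iff] at h
  rcases h with ⟨h1, h2⟩ | ⟨h1, h2⟩
  · exact absurd h1 (by simp)
  · exact ⟨a', h2⟩

lemma biclique_mem {α β : Type} (a : α) (b : β) :
    s(Sum.inl a, Sum.inr b) ∈ bicliqueEdges α β := ⟨a, b, rfl⟩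

/-- generic cardinality transfer -/
lemma ncard_inl_eq_inr {α β : Type} [Fintype α] [Fintype β] {S : Set (α ⊕ β)}
    (f : α → β) (g : β → α) (hgf : ∀ a, g (f a) = a) (hfg : ∀ b, f (g b) = b)
    (hfwd : ∀ a, Sum.inl a ∈ S → Sum.inr (f a) ∈ S)
    (hbwd : ∀ b, Sum.inr b ∈ S → Sum.inl (g b) ∈ S) :
    (S ∩ Set.range Sum.inl).ncard = (S ∩ Set.range Sum.inr).ncard := by
  have h1 : S ∩ Set.range Sum.inl = Sum.inl '' {a | Sum.inl a ∈ S} := by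
    ext x
    simp only [Set.mem_inter_iff, Set.mem_range, Set.mem_image, Set.mem_setOf_eq]
    constructor
    · rintro ⟨hx, a, rfl⟩; exact ⟨a, hx, rfl⟩
    · rintro ⟨a, ha, rfl⟩; exact ⟨ha, a, rfl⟩
  have h2 : S ∩ Set.range Sum.inr = Sum.inr '' {b | Sum.inr b ∈ S} := by
    ext x
    simp only [Set.mem_inter_iff, Set.mem_range, Set.mem_image, Set.mem_setOf_eq]
    constructor
    · rintro ⟨hx, b, rfl⟩; exact ⟨b, hx, rfl⟩
    · rintro ⟨b, hb, rfl⟩; exact ⟨hb, b, rfl⟩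
  have h3 : f '' {a | Sum.inl a ∈ S} = {b | Sum.inr b ∈ S} := by
    ext b'
    simp only [Set.mem_image, Set.mem_setOf_eq]
    constructor
    · rintro ⟨a', ha', rfl⟩; exact hfwd a' ha'
    · intro hb'; exact ⟨g b', hbwd b' hb', hfg b'⟩
  rw [h1, h2, ← h3,
    Set.ncard_image_of_injective _ Sum.inl_injective,
    Set.ncard_image_of_injective _ Sum.inr_injective,
    Set.ncard_image_of_injective _ (Function.LeftInverse.injective hgf)]

/-- in an extremally matched bi-clique with injective labeling,
for every edge `e = {a,b}` we have `|In(e) ∩ A| = |In(e) ∩ B|` and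
`|Out(e) ∩ A| = |Out(e) ∩ B|`. -/
theorem stmt11 {α β : Type} [Fintype α] [Fintype β]
    (lab : Sym2 (α ⊕ β) → ℕ) (hinj : Set.InjOn lab (bicliqueEdges α β))
    (hEM : ExtremallyMatched lab) (a : α) (b : β) :
    (InEdge lab (bicliqueEdges α β) (Sum.inl a) (Sum.inr b) ∩ Set.range Sum.inl).ncard =
      (InEdge lab (bicliqueEdges α β) (Sum.inl a) (Sum.inr b) ∩ Set.range Sum.inr).ncard ∧
    (OutEdge lab (bicliqueEdges α β) (Sum.inl a) (Sum.inr b) ∩ Set.range Sum.inl).ncard =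
      (OutEdge lab (bicliqueEdges α β) (Sum.inl a) (Sum.inr b) ∩ Set.range Sum.inr).ncard := by
  obtain ⟨⟨f, g, hf, hg, hgf, hfg⟩, ⟨F, G, hF, hG, hGF, hFG⟩⟩ := hEM
  set E := bicliqueEdges α β with hEdef
  set t := lab s(Sum.inl a, Sum.inr b) with ht
  constructor
  · -- In part
    apply ncard_inl_eq_inr f g hgf hfg
    · intro a' ha'
      have hEe : s(Sum.inr (f a'), Sum.inl a') ∈ E := by
        rw [Sym2.eq_swap]; exact biclique_mem a' (f a')
      have hmin : ∀ x, s(Sum.inl a', x) ∈ E →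
          lab s(Sum.inr (f a'), Sum.inl a') ≤ lab s(Sum.inl a', x) := by
        intro x hx
        obtain ⟨b'', rfl⟩ := biclique_incident_inl hx
        rw [Sym2.eq_swap]
        exact hf a' b''
      rcases ha' with h | h
      · exact Or.inl (InSet_extend' h hEe hmin (by
          intro hvw
          have : a' = a := by injection hvw
          subst this
          rw [Sym2.eq_swap]
          exact hf a' b))
      · exact Or.inr (InSet_extend' h hEe hmin (by
          intro hvw; exact absurd hvw (by simp)))
    · intro b' hb'
      have hEe : s(Sum.inl (g b'), Sum.inr b') ∈ E := biclique_mem (g b') b'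
      have hmin : ∀ x, s(Sum.inr b', x) ∈ E →
          lab s(Sum.inl (g b'), Sum.inr b') ≤ lab s(Sum.inr b', x) := by
        intro x hx
        obtain ⟨a'', rfl⟩ := biclique_incident_inr hx
        rw [Sym2.eq_swap (a := Sum.inr b')]
        exact hg b' a''
      rcases hb' with h | h
      · exact Or.inl (InSet_extend' h hEe hmin (by
          intro hvw; exact absurd hvw (by simp)))
      · exact Or.inr (InSet_extend' h hEe hmin (by
          intro hvw
          have : b' = b := by injection hvw
          subst this
          exact hg b' a))
  · -- Out part
    apply ncard_inl_eq_inr F G hGF hFG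
    · intro a' ha'
      have hEe : s(Sum.inl a', Sum.inr (F a')) ∈ E := biclique_mem a' (F a')
      have hmax : ∀ x, s(x, Sum.inl a') ∈ E →
          lab s(x, Sum.inl a') ≤ lab s(Sum.inl a', Sum.inr (F a')) := by
        intro x hx
        rw [Sym2.eq_swap] at hx
        obtain ⟨b'', rfl⟩ := biclique_incident_inl hx
        rw [Sym2.eq_swap]
        exact hF a' b''
      rcases ha' with h | h
      · exact Or.inl (OutSet_extend' h hEe hmax (by
          intro hvw
          have : a' = a := by injection hvw
          subst this
          exact hF a' b))
      · exact Or.inr (OutSet_extend' h hEe hmax (by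
          intro hvw; exact absurd hvw (by simp)))
    · intro b' hb'
      have hEe : s(Sum.inr b', Sum.inl (G b')) ∈ E := by
        rw [Sym2.eq_swap]; exact biclique_mem (G b') b'
      have hmax : ∀ x, s(x, Sum.inr b') ∈ E →
          lab s(x, Sum.inr b') ≤ lab s(Sum.inr b', Sum.inl (G b')) := by
        intro x hx
        rw [Sym2.eq_swap] at hx
        obtain ⟨a'', rfl⟩ := biclique_incident_inr hx
        rw [Sym2.eq_swap (a := Sum.inr b')]
        exact hG b' a''
      rcases hb' with h | h
      · exact Or.inl (OutSet_extend' h hEe hmax (by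
          intro hvw; exact absurd hvw (by simp)))
      · exact Or.inr (OutSet_extend' h hEe hmax (by
          intro hvw
          have : b' = b := by injection hvw
          subst this
          rw [Sym2.eq_swap (a := Sum.inr b')]
          exact hG b' a))

end TS
end
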